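/- For every fixed g ≥ 0, the set of all 1-backbone shapes of genus g (over all n) is finite. -/

import Mathlib

namespace RNA

noncomputable section

/-- The forward orbit of `x` under iteration of `f`. -/
def orbitOf (f : ℕ → ℕ) (x : ℕ) : Set ℕ := {y | ∃ j : ℕ, f^[j] x = y}

/-- The number of cycles (orbits) of `f` among the points `< k`. -/
def numCyclesOn (f : ℕ → ℕ) (k : ℕ) : ℕ :=
  Set.ncard {S : Set ℕ | ∃ x, x < k ∧ S = orbitOf f x}

/-- The number of cycles of length at least `3` among the points `< k` (multiloops). -/
def numMultiOn (f : ℕ → ℕ) (k : ℕ) : ℕ :=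
  Set.ncard {S : Set ℕ | (∃ x, x < k ∧ S = orbitOf f x) ∧ 3 ≤ S.ncard}

/-- The cyclic permutation `(0 1 ⋯ k-1)`, as a function on `ℕ` fixing everything `≥ k`. -/
def gammaOne (k : ℕ) : ℕ → ℕ := fun i => if i + 1 = k then 0 else if i < k then i + 1 else i

/-- The permutation with the two cycles `(0 ⋯ m-1)` and `(m ⋯ k-1)`. -/
def gammaTwo (m k : ℕ) : ℕ → ℕ := fun i =>
  if i + 1 = m then 0 else if i + 1 = k then m else if i < k then i + 1 else i

/-- A planted 1-backbone diagram with `n` arcs: an involution on the vertices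
`0, 1, …, 2n-1` (shifting the paper's labels `1, …, 2n` by one). -/
structure OneD where
  n : ℕ
  f : ℕ → ℕ

namespace OneD

/-- Well-formedness: `n ≥ 1`, `f` is a fixed-point-free involution of `{0, …, 2n-1}`
(extended by the identity elsewhere) pairing `0` with `2n-1` (the rainbow). -/
def WF (D : OneD) : Prop :=
  1 ≤ D.n ∧ (∀ i, i < 2 * D.n → D.f i < 2 * D.n) ∧
    (∀ i, 2 * D.n ≤ i → D.f i = i) ∧ (∀ i, D.f (D.f i) = i) ∧
    (∀ i, i < 2 * D.n → D.f i ≠ i) ∧ D.f 0 = 2 * D.n - 1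

/-- `{i,j}` is an arc. -/
def arc (D : OneD) (i j : ℕ) : Prop := i < 2 * D.n ∧ D.f i = j

/-- A shape: no 1-arc other than possibly the rainbow, and no stack
(no pair of arcs `{i,j}`, `{i+1,j-1}` with `i+1 < j-1`). -/
def IsShape (D : OneD) : Prop :=
  (∀ i, D.arc i (i + 1) → i = 0 ∧ i + 1 = 2 * D.n - 1) ∧
  (∀ i j, D.arc i j → D.arc (i + 1) (j - 1) → ¬ (i + 1 < j - 1))

/-- The boundary permutation `α ∘ γ`. -/
def bd (D : OneD) : ℕ → ℕ := D.f ∘ gammaOne (2 * D.n)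

/-- The number `r` of boundary components. -/
def r (D : OneD) : ℕ := numCyclesOn D.bd (2 * D.n)

/-- The number of multiloops: boundary components of length at least 3. -/
def nMulti (D : OneD) : ℕ := numMultiOn D.bd (2 * D.n)

/-- The genus `g`, defined by `2 - 2g - r = 1 - n`. -/
def HasGenus (D : OneD) (g : ℕ) : Prop := 2 * g + D.r = D.n + 1

/-- A-shape: the vertex following the partner of vertex `1` (paper's vertex `2`)
is paired with vertex `2n-2` (paper's vertex `2n-1`); only for `n ≥ 2`. -/
def IsA (D : OneD) : Prop := 2 ≤ D.n ∧ D.f (D.f 1 + 1) = 2 * D.n - 2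

/-- B-shape: a shape with `n ≥ 2` arcs which is not an A-shape. -/
def IsB (D : OneD) : Prop := 2 ≤ D.n ∧ D.f (D.f 1 + 1) ≠ 2 * D.n - 2

end OneD

/-- The set of 1-backbone shapes of genus `g`. -/
def oneShapeSet (g : ℕ) : Set OneD := {D | D.WF ∧ D.IsShape ∧ D.HasGenus g}

/-- The set of 1-backbone shapes of genus `g` with `n` arcs. -/
def oneShapeSetN (g n : ℕ) : Set OneD := {D | D ∈ oneShapeSet g ∧ D.n = n}

/-- The set of A-shapes of genus `g`. -/
def ASet (g : ℕ) : Set OneD := {D | D ∈ oneShapeSet g ∧ D.IsA}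

/-- The set `𝒜_g(n)` of A-shapes of genus `g` with `n` arcs. -/
def ASetN (g n : ℕ) : Set OneD := {D | D ∈ oneShapeSetN g n ∧ D.IsA}

/-- The set `ℬ_g(n)` of B-shapes of genus `g` with `n` arcs. -/
def BSetN (g n : ℕ) : Set OneD := {D | D ∈ oneShapeSetN g n ∧ D.IsB}

/-- `s_g(n)`: the number of 1-backbone shapes of genus `g` with `n` arcs. -/
def sCount (g n : ℕ) : ℕ := (oneShapeSetN g n).ncard

/-- `a_g(n)`: the number of A-shapes of genus `g` with `n` arcs. -/
def aCount (g n : ℕ) : ℕ := (ASetN g n).ncard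

/-- A 2-backbone diagram with `n` arcs and cut point `m`: an involution on the
vertices `0, …, 2n-1`, with backbones `{0, …, m-1}` and `{m, …, 2n-1}`. -/
structure TwoD where
  n : ℕ
  m : ℕ
  f : ℕ → ℕ

namespace TwoD

/-- Well-formedness of a 2-backbone matching: two nonempty backbones and `f` a
fixed-point-free involution of `{0, …, 2n-1}` (extended by the identity). -/
def WF (D : TwoD) : Prop :=
  1 ≤ D.m ∧ D.m < 2 * D.n ∧ (∀ i, i < 2 * D.n → D.f i < 2 * D.n) ∧
    (∀ i, 2 * D.n ≤ i → D.f i = i) ∧ (∀ i, D.f (D.f i) = i) ∧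
    (∀ i, i < 2 * D.n → D.f i ≠ i)

/-- `{i,j}` is an arc. -/
def arc (D : TwoD) (i j : ℕ) : Prop := i < 2 * D.n ∧ D.f i = j

/-- `i` and `j` lie in the same backbone. -/
def sameBB (D : TwoD) (i j : ℕ) : Prop := (i < D.m ∧ j < D.m) ∨ (D.m ≤ i ∧ D.m ≤ j)

/-- Connectivity: some arc has one endpoint in each backbone. -/
def Connected (D : TwoD) : Prop := ∃ i j, D.arc i j ∧ i < D.m ∧ D.m ≤ j

/-- A 2-backbone shape: both rainbows `{0, m-1}` and `{m, 2n-1}` are present,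
there is no 1-arc (an arc `{i,i+1}` within one backbone) other than possibly the
rainbows, and no stack. -/
def IsShape (D : TwoD) : Prop :=
  2 ≤ D.m ∧ D.m + 2 ≤ 2 * D.n ∧ D.f 0 = D.m - 1 ∧ D.f D.m = 2 * D.n - 1 ∧
  (∀ i, D.arc i (i + 1) → D.sameBB i (i + 1) →
      (i = 0 ∧ i + 1 = D.m - 1) ∨ (i = D.m ∧ i + 1 = 2 * D.n - 1)) ∧
  (∀ i j, D.arc i j → D.arc (i + 1) (j - 1) → D.sameBB i (i + 1) →
      D.sameBB (j - 1) j → ¬ (i + 1 < j - 1))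

/-- The boundary permutation `α ∘ γ`. -/
def bd (D : TwoD) : ℕ → ℕ := D.f ∘ gammaTwo D.m (2 * D.n)

/-- The number `r` of boundary components. -/
def r (D : TwoD) : ℕ := numCyclesOn D.bd (2 * D.n)

/-- The number of multiloops: boundary components of length at least 3. -/
def nMulti (D : TwoD) : ℕ := numMultiOn D.bd (2 * D.n)

/-- The genus `g`, defined by `2 - 2g - r = 2 - n`. -/
def HasGenus (D : TwoD) (g : ℕ) : Prop := 2 * g + D.r = D.n

end TwoD

/-- The set `𝒬_g(n)` of connected 2-backbone shapes of genus `g` with `n` arcs. -/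
def twoShapeSetN (g n : ℕ) : Set TwoD :=
  {D | D.WF ∧ D.IsShape ∧ D.Connected ∧ D.HasGenus g ∧ D.n = n}

/-- `q_g(n)`: the number of connected 2-backbone shapes of genus `g` with `n` arcs. -/
def qCount (g n : ℕ) : ℕ := (twoShapeSetN g n).ncard

/-- The gluing map `η`: concatenate the two backbones (the two old rainbows become
ordinary arcs) and add a new rainbow over the resulting single backbone. -/
def glue (D : TwoD) : OneD :=
  ⟨D.n + 1, fun i =>
    if i = 0 then 2 * D.n + 1
    else if i = 2 * D.n + 1 then 0
    else if i ≤ 2 * D.n then D.f (i - 1) + 1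
    else i⟩

/-- Place an ordered pair of 1-backbone diagrams on two backbones,
each keeping its own rainbow. -/
def combine (S T : OneD) : TwoD :=
  ⟨S.n + T.n, 2 * S.n, fun i =>
    if i < 2 * S.n then S.f i
    else if i < 2 * (S.n + T.n) then T.f (i - 2 * S.n) + 2 * S.n
    else i⟩

/-- The set `𝒬'_g(N)`: the disjoint union of the set of connected 2-backbone shapes
of genus `g` with `N` arcs and the set of ordered pairs of 1-backbone shapes whose
genera are positive and sum to `g+1` and whose arc numbers sum to `N`. -/
def QprimeSetN (g N : ℕ) : Set (TwoD ⊕ OneD × OneD) :=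
  {x | Sum.elim
        (fun D : TwoD => D.WF ∧ D.IsShape ∧ D.Connected ∧ D.HasGenus g ∧ D.n = N)
        (fun p : OneD × OneD =>
          p.1.WF ∧ p.1.IsShape ∧ p.2.WF ∧ p.2.IsShape ∧
          (∃ g₁ g₂, 1 ≤ g₁ ∧ 1 ≤ g₂ ∧ g₁ + g₂ = g + 1 ∧
            p.1.HasGenus g₁ ∧ p.2.HasGenus g₂) ∧
          p.1.n + p.2.n = N) x}

/-- The gluing map `η` on `𝒬'`: glue a connected 2-backbone shape directly, and glue
a pair of 1-backbone shapes after placing them on two backbones. -/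
def etaMap : TwoD ⊕ OneD × OneD → OneD := Sum.elim glue fun p => glue (combine p.1 p.2)

/-- The 2-backbone diagram underlying an element of `𝒬'`. -/
def underlyingTwoD : TwoD ⊕ OneD × OneD → TwoD := Sum.elim id fun p => combine p.1 p.2

/-- Old label of the new vertex `k` after deleting the two points `a < b`. -/
def insTwo (a b k : ℕ) : ℕ := if k < a then k else if k + 1 < b then k + 1 else k + 2

/-- New label of the old vertex `j` after deleting the two points `a < b`. -/
def delTwo (a b j : ℕ) : ℕ := j - (if a < j then 1 else 0) - (if b < j then 1 else 0)

/-- The involution obtained from `f` by deleting the two paired points `a < b`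
and relabeling. -/
def deleteTwo (f : ℕ → ℕ) (a b : ℕ) : ℕ → ℕ := fun k => delTwo a b (f (insTwo a b k))

/-- The map `θ`: remove from an A-shape the arc joining the vertex following the
partner of vertex `1` (paper's vertex `2`) to the vertex `2n-2` (paper's `2n-1`),
deleting its two endpoints and relabeling. -/
def theta (D : OneD) : OneD := ⟨D.n - 1, deleteTwo D.f (D.f 1 + 1) (2 * D.n - 2)⟩

/-- The new cut point after deleting the points `a` and `b`. -/
def mshift (m a b : ℕ) : ℕ := m - (if a < m then 1 else 0) - (if b < m then 1 else 0)

/-- One reduction step: delete a 1-arc (an arc `{i,i+1}` within one backbone), or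
collapse a stack `{i,j}`, `{i+1,j-1}` by deleting the inner arc `{i+1,j-1}`. -/
def Step (M M' : TwoD) : Prop :=
  (∃ i, M.arc i (i + 1) ∧ M.sameBB i (i + 1) ∧
      M' = ⟨M.n - 1, mshift M.m i (i + 1), deleteTwo M.f i (i + 1)⟩) ∨
  (∃ i j, M.arc i j ∧ M.arc (i + 1) (j - 1) ∧ i + 1 < j - 1 ∧ M.sameBB i (i + 1) ∧
      M.sameBB (j - 1) j ∧
      M' = ⟨M.n - 1, mshift M.m (i + 1) (j - 1), deleteTwo M.f (i + 1) (j - 1)⟩)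

/-- A pure preshape: no 1-arc and no stack remain. -/
def Reduced (P : TwoD) : Prop :=
  (∀ i, ¬ (P.arc i (i + 1) ∧ P.sameBB i (i + 1))) ∧
  (∀ i j, P.arc i j → P.arc (i + 1) (j - 1) → P.sameBB i (i + 1) →
      P.sameBB (j - 1) j → ¬ (i + 1 < j - 1))

/-- Relabeling of an old vertex of a preshape after planting rainbows. -/
def newlab (m o : ℕ) : ℕ := if o < m then o + 1 else o + 3

/-- Plant a rainbow over each backbone of a pure preshape. -/
def plant (P : TwoD) : TwoD :=
  ⟨P.n + 2, P.m + 2, fun k =>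
    if k = 0 then P.m + 1
    else if k = P.m + 1 then 0
    else if k = P.m + 2 then 2 * P.n + 3
    else if k = 2 * P.n + 3 then P.m + 2
    else if k ≤ P.m then newlab P.m (P.f (k - 1))
    else if k ≤ 2 * P.n + 2 then newlab P.m (P.f (k - 3))
    else k⟩

/-- `s` is the shape of the 2-backbone matching `M`: iteratively collapse stacks and
delete 1-arcs until none remains, then add a rainbow over each backbone. -/
def ShapeOf (M s : TwoD) : Prop :=
  ∃ P : TwoD, Relation.ReflTransGen Step M P ∧ Reduced P ∧ s = plant P

/-- `q_s(n)`: the number of 2-backbone matchings with `n` arcs whose shape is `s`. -/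
def fiberCount (s : TwoD) (n : ℕ) : ℕ :=
  Set.ncard {M : TwoD | M.WF ∧ M.n = n ∧ ShapeOf M s}

/-- `w_g(n)`: the number of connected 2-backbone matchings with `n` arcs and genus `g`. -/
def wCount (g n : ℕ) : ℕ :=
  Set.ncard {M : TwoD | M.WF ∧ M.Connected ∧ M.HasGenus g ∧ M.n = n}

/-- `W_g(z) = Σ_n w_g(n) zⁿ`, as a formal power series. -/
def Wseries (g : ℕ) : PowerSeries ℤ := PowerSeries.mk fun n => (wCount g n : ℤ)

/-- The Catalan generating function `C₀(z) = Σ_n Catalan(n) zⁿ`. -/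
def catGF : PowerSeries ℤ := PowerSeries.mk fun n => (catalan n : ℤ)

/-- `q̃_g(l)`: the number of connected 2-backbone shapes of genus `g` having `l` arcs
besides their two rainbows. -/
def qlCount (g l : ℕ) : ℕ := qCount g (l + 2)

end



section AuxOrbits

variable {β : ℕ → ℕ} {k : ℕ}
  (hmap : ∀ x, x < k → β x < k)
  (hinj : ∀ u, u < k → ∀ v, v < k → β u = β v → u = v)

include hmap in
lemma iter_lt {x : ℕ} (hx : x < k) : ∀ j, β^[j] x < k := by
  intro j
  induction j with
  | zero => simpa
  | succ p ih => rw [Function.iterate_succ_apply']; exact hmap _ ih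

include hmap hinj in
lemma iter_inj (j : ℕ) : ∀ u v, u < k → v < k → β^[j] u = β^[j] v → u = v := by
  induction j with
  | zero => intro u v _ _ h; simpa using h
  | succ p ih =>
    intro u v hu hv h
    rw [Function.iterate_succ_apply, Function.iterate_succ_apply] at h
    exact hinj _ hu _ hv (ih _ _ (hmap _ hu) (hmap _ hv) h)

include hmap hinj in
lemma exists_period {x : ℕ} (hx : x < k) : ∃ p, 0 < p ∧ β^[p] x = x := by
  obtain ⟨a, b, hab, h⟩ := Finite.exists_ne_map_eq_of_infinite
    (fun j : ℕ => (⟨β^[j] x, iter_lt hmap hx j⟩ : Fin k))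
  have h' : β^[a] x = β^[b] x := congrArg Fin.val h
  rcases Nat.lt_or_ge a b with hlt | hge
  · refine ⟨b - a, by omega, ?_⟩
    have : β^[a] (β^[b - a] x) = β^[a] x := by
      rw [← Function.iterate_add_apply]
      rw [show a + (b - a) = b by omega]; exact h'.symm
    exact iter_inj hmap hinj a _ _ (iter_lt hmap hx _) hx this
  · have hlt : b < a := by omega
    refine ⟨a - b, by omega, ?_⟩
    have : β^[b] (β^[a - b] x) = β^[b] x := by
      rw [← Function.iterate_add_apply]
      rw [show b + (a - b) = a by omega]; exact h'
    exact iter_inj hmap hinj b _ _ (iter_lt hmap hx _) hx this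

lemma iter_period {x : ℕ} {p : ℕ} (hp : β^[p] x = x) : ∀ m, β^[m * p] x = x := by
  intro m
  induction m with
  | zero => simp
  | succ q ih =>
    rw [Nat.succ_mul, Function.iterate_add_apply, hp, ih]

lemma mem_orbit_self (x : ℕ) : x ∈ orbitOf β x := ⟨0, rfl⟩

include hmap in
lemma orbit_subset {x : ℕ} (hx : x < k) : orbitOf β x ⊆ {y | y < k} := by
  rintro y ⟨j, rfl⟩; exact iter_lt hmap hx j

include hmap hinj in
lemma orbit_symm {x y : ℕ} (hx : x < k) (hy : y ∈ orbitOf β x) : x ∈ orbitOf β y := by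
  obtain ⟨j, rfl⟩ := hy
  obtain ⟨p, hp0, hp⟩ := exists_period hmap hinj hx
  refine ⟨j * p - j, ?_⟩
  have hj : j ≤ j * p := Nat.le_mul_of_pos_right j hp0
  rw [← Function.iterate_add_apply, show j * p - j + j = j * p by omega]
  exact iter_period hp j

lemma orbit_trans {x y z : ℕ} (hy : y ∈ orbitOf β x) (hz : z ∈ orbitOf β y) :
    z ∈ orbitOf β x := by
  obtain ⟨j, rfl⟩ := hy; obtain ⟨i, rfl⟩ := hz
  exact ⟨i + j, Function.iterate_add_apply β i j x⟩

include hmap hinj in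
lemma orbit_eq_of_mem {x y : ℕ} (hx : x < k) (hy : y ∈ orbitOf β x) :
    orbitOf β y = orbitOf β x := by
  ext z
  constructor
  · exact fun hz => orbit_trans hy hz
  · exact fun hz => orbit_trans (orbit_symm hmap hinj hx hy) hz

include hmap hinj in
lemma orbit_eq_or_disjoint {x y : ℕ} (hx : x < k) (hy : y < k) :
    orbitOf β x = orbitOf β y ∨ Disjoint (orbitOf β x) (orbitOf β y) := by
  by_cases h : Disjoint (orbitOf β x) (orbitOf β y)
  · exact Or.inr h
  · left
    obtain ⟨z, hz1, hz2⟩ := Set.not_disjoint_iff.1 h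
    rw [← orbit_eq_of_mem hmap hinj hx hz1, ← orbit_eq_of_mem hmap hinj hy hz2]

end AuxOrbits

lemma three_mul_ncard_le : ∀ (m : ℕ) (T : Set (Set ℕ)) (V : Set ℕ), V.Finite → T.ncard = m →
    (∀ S ∈ T, S ⊆ V) → T.PairwiseDisjoint id → (∀ S ∈ T, 3 ≤ S.ncard) →
    3 * m ≤ V.ncard := by
  intro m
  induction m with
  | zero => intro _ _ _ _ _ _ _; simp
  | succ p ih =>
    intro T V hV hm hsub hdisj hcard
    have hTfin : T.Finite :=
      (hV.finite_subsets).subset (by intro S hS; exact hsub S hS)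
    have hne : T.Nonempty := Set.nonempty_of_ncard_ne_zero (by omega)
    obtain ⟨S, hS⟩ := hne
    have hSfin : S.Finite := hV.subset (hsub S hS)
    have hcard' : (T \ {S}).ncard = p := by
      rw [Set.ncard_diff_singleton_of_mem hS, hm]
      omega
    have key := ih (T \ {S}) (V \ S) (hV.diff (t := S)) hcard'
      (by
        intro T' hT' x hx
        refine ⟨hsub T' hT'.1 hx, fun hxS => ?_⟩
        have := hdisj hT'.1 hS (by simpa using hT'.2)
        exact (Set.disjoint_left.1 this) hx hxS)
      (hdisj.subset Set.diff_subset)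
      (fun T' hT' => hcard T' hT'.1)
    have h1 : (V \ S).ncard = V.ncard - S.ncard := Set.ncard_diff (hsub S hS) hSfin
    have h2 : S.ncard ≤ V.ncard := Set.ncard_le_ncard (hsub S hS) hV
    have h3 : 3 ≤ S.ncard := hcard S hS
    omega

/-- The number of arcs of a 1-backbone shape of genus `g` is bounded. -/
lemma OneD.n_le_of_shape {D : OneD} {g : ℕ} (hWF : D.WF) (hSh : D.IsShape)
    (hG : D.HasGenus g) : D.n ≤ 6 * g + 1 := by
  obtain ⟨hn1, hf_lt, hf_id, hf_inv, hf_ne, hf0⟩ := hWF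
  rcases Nat.lt_or_ge D.n 2 with hn2 | hn2
  · omega
  set k := 2 * D.n with hk
  set β := D.bd with hβ
  have hβdef : ∀ x, β x = D.f (gammaOne k x) := fun x => rfl
  have hγlt : ∀ x, x < k → gammaOne k x < k := by
    intro x hx; unfold gammaOne; split_ifs <;> omega
  have hγinj : ∀ u, u < k → ∀ v, v < k → gammaOne k u = gammaOne k v → u = v := by
    intro u hu v hv h; unfold gammaOne at h; split_ifs at h <;> omega
  have hmap : ∀ x, x < k → β x < k := by
    intro x hx; rw [hβdef]; exact hf_lt _ (hγlt x hx)
  have hinj : ∀ u, u < k → ∀ v, v < k → β u = β v → u = v := by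
    intro u hu v hv h
    rw [hβdef, hβdef] at h
    have h2 := congrArg D.f h
    rw [hf_inv, hf_inv] at h2
    exact hγinj _ hu _ hv h2
  have hγtop : gammaOne k (k - 1) = 0 := by
    unfold gammaOne; rw [if_pos (by omega)]
  have hfix : β (k - 1) = k - 1 := by
    rw [hβdef, hγtop, hf0]
  have hγ' : ∀ x, x < k → x ≠ k - 1 → gammaOne k x = x + 1 := by
    intro x hx hne; unfold gammaOne; split_ifs <;> omega
  have hnofix : ∀ x, x < k → x ≠ k - 1 → β x ≠ x := by
    intro x hx hxne hcon
    rw [hβdef, hγ' x hx hxne] at hcon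
    have hfx : D.f x = x + 1 := by
      have h2 := congrArg D.f hcon
      rw [hf_inv] at h2
      omega
    obtain ⟨h0, h1⟩ := hSh.1 x ⟨hx, hfx⟩
    omega
  have hno2 : ∀ x, x < k → x ≠ k - 1 → β (β x) = x → False := by
    intro x hx hxne hcon
    have hne1 : β x ≠ x := hnofix x hx hxne
    set y := β x with hy'
    have hy : y < k := hmap _ hx
    have hyne : y ≠ k - 1 := by
      intro h
      rw [h] at hcon
      rw [hfix] at hcon
      omega
    have e1 : D.f (x + 1) = y := by rw [hy', hβdef, hγ' x hx hxne]
    have e2 : D.f (y + 1) = x := by rw [← hcon, hβdef, hγ' y hy hyne]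
    have e3 : D.f y = x + 1 := by rw [← e1, hf_inv]
    have e4 : D.f x = y + 1 := by rw [← e2, hf_inv]
    have hxy : x ≠ y := fun h => hne1 h.symm
    have hy1 : y ≠ x + 1 := by
      intro h; exact hf_ne y hy (by rw [e3, ← h])
    have hx1 : x ≠ y + 1 := by
      intro h; exact hf_ne x hx (by rw [e4, ← h])
    have s1 := hSh.2 x (y + 1) ⟨hx, e4⟩ ⟨by omega, by simpa using e1⟩
    have s2 := hSh.2 y (x + 1) ⟨hy, e3⟩ ⟨by omega, by simpa using e2⟩
    simp only [Nat.add_sub_cancel] at s1 s2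
    omega
  -- the orbit family
  set O : Set (Set ℕ) := {S : Set ℕ | ∃ x, x < k ∧ S = orbitOf β x} with hO
  have hr : D.r = O.ncard := rfl
  have hOsub : ∀ S ∈ O, S ⊆ {y | y < k} := by
    rintro S ⟨x, hx, rfl⟩; exact orbit_subset hmap hx
  have hOfin : O.Finite :=
    ((Set.finite_Iio k).finite_subsets).subset (fun S hS => hOsub S hS)
  have hsing : orbitOf β (k - 1) = {k - 1} := by
    ext z
    constructor
    · rintro ⟨j, rfl⟩
      have : ∀ j, β^[j] (k - 1) = k - 1 := by
        intro j
        induction j with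
        | zero => rfl
        | succ p ih => rw [Function.iterate_succ_apply', ih, hfix]
      simp [this j]
    · rintro rfl; exact mem_orbit_self _
  have hmem : ({k - 1} : Set ℕ) ∈ O := ⟨k - 1, by omega, hsing.symm⟩
  set T : Set (Set ℕ) := O \ {({k - 1} : Set ℕ)} with hT
  have hTsub : ∀ S ∈ T, S ⊆ {y | y < k ∧ y ≠ k - 1} := by
    rintro S ⟨⟨x, hx, rfl⟩, hSne⟩ z hz
    refine ⟨orbit_subset hmap hx hz, fun hzk => ?_⟩
    apply hSne
    subst hzk
    have := orbit_eq_of_mem hmap hinj hx hz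
    simp only [Set.mem_singleton_iff]
    rw [← this, hsing]
  have hTcard3 : ∀ S ∈ T, 3 ≤ S.ncard := by
    rintro S hST
    obtain ⟨⟨x, hx, rfl⟩, hSne⟩ := hST
    have hxmem : x ∈ orbitOf β x := mem_orbit_self x
    have hxne : x ≠ k - 1 := (hTsub _ ⟨⟨x, hx, rfl⟩, hSne⟩ hxmem).2
    have hbmem : β x ∈ orbitOf β x := ⟨1, rfl⟩
    have hbbmem : β (β x) ∈ orbitOf β x := ⟨2, rfl⟩
    have hbx : β x < k := hmap _ hx
    have hbxne : β x ≠ k - 1 := (hTsub _ ⟨⟨x, hx, rfl⟩, hSne⟩ hbmem).2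
    have hab : x ≠ β x := fun h => hnofix x hx hxne h.symm
    have hac : x ≠ β (β x) := fun h => hno2 x hx hxne h.symm
    have hbc : β x ≠ β (β x) := fun h => hnofix (β x) hbx hbxne h.symm
    have h3 : ({x, β x, β (β x)} : Set ℕ).ncard = 3 :=
      Set.ncard_eq_three.2 ⟨x, β x, β (β x), hab, hac, hbc, rfl⟩
    rw [← h3]
    apply Set.ncard_le_ncard
    · intro z hz
      rcases hz with rfl | rfl | rfl
      · exact hxmem
      · exact hbmem
      · exact hbbmem
    · exact (Set.finite_Iio k).subset (orbit_subset hmap hx)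
  have hTdisj : T.PairwiseDisjoint id := by
    rintro S hS S' hS' hne
    obtain ⟨x, hx, rfl⟩ := hS.1
    obtain ⟨y, hy, rfl⟩ := hS'.1
    rcases orbit_eq_or_disjoint hmap hinj hx hy with heq | hdis
    · exact absurd heq hne
    · exact hdis
  have hVfin : ({y | y < k ∧ y ≠ k - 1} : Set ℕ).Finite :=
    (Set.finite_Iio k).subset (fun y hy => hy.1)
  have hVcard : ({y | y < k ∧ y ≠ k - 1} : Set ℕ).ncard = k - 1 := by
    have : ({y | y < k ∧ y ≠ k - 1} : Set ℕ) = ↑((Finset.range k).erase (k - 1)) := by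
      ext y
      simp only [Set.mem_setOf_eq, Finset.coe_erase, Set.mem_diff, Finset.mem_coe,
        Finset.mem_range, Set.mem_singleton_iff]
    rw [this, Set.ncard_coe_finset, Finset.card_erase_of_mem (by simp; omega), Finset.card_range]
  have hkey := three_mul_ncard_le T.ncard T {y | y < k ∧ y ≠ k - 1} hVfin rfl hTsub hTdisj hTcard3
  rw [hVcard] at hkey
  have hTcard : T.ncard = O.ncard - 1 := Set.ncard_diff_singleton_of_mem hmem
  have hOpos : 0 < O.ncard := (Set.ncard_pos hOfin).2 ⟨_, hmem⟩
  have hG' : 2 * g + O.ncard = D.n + 1 := by rw [← hr]; exact hG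
  omega

/-- For every fixed `g ≥ 0`, the set of all 1-backbone shapes of
genus `g` (over all `n`) is finite. -/
theorem oneShapeSet_finite (g : ℕ) : (oneShapeSet g).Finite := by
  classical
  set N := 6 * g + 1 with hN
  set K := 2 * N + 2 with hK
  have hsub : oneShapeSet g ⊆ {D : OneD | D.WF ∧ D.n ≤ N} := by
    rintro D ⟨h1, h2, h3⟩
    exact ⟨h1, OneD.n_le_of_shape h1 h2 h3⟩
  refine Set.Finite.subset ?_ hsub
  set F : OneD → Fin (N + 1) × (Fin K → Fin K) := fun D =>
    (⟨min D.n N, by omega⟩, fun i => if h : D.f i.val < K then ⟨D.f i.val, h⟩ else ⟨0, by omega⟩)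
    with hF
  apply Set.Finite.of_finite_image (f := F) (Set.toFinite _)
  rintro D ⟨hD, hDn⟩ E ⟨hE, hEn⟩ hFeq
  obtain ⟨hfst, hsnd⟩ := Prod.mk.injEq .. ▸ hFeq
  have hn : D.n = E.n := by
    have := congrArg Fin.val hfst
    simp only [hF] at this
    omega
  have hf : D.f = E.f := by
    funext i
    rcases Nat.lt_or_ge i (2 * D.n) with hi | hi
    · have hiK : i < K := by omega
      have hDfi : D.f i < K := by have := hD.2.1 i hi; omega
      have hEfi : E.f i < K := by
        have := hE.2.1 i (by omega); omega
      have := congrFun hsnd ⟨i, hiK⟩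
      simp only [hF, dif_pos hDfi, dif_pos hEfi] at this
      exact congrArg Fin.val this
    · rw [hD.2.2.1 i hi, hE.2.2.1 i (by omega)]
  obtain ⟨n1, f1⟩ := D
  obtain ⟨n2, f2⟩ := E
  simp only at hn hf
  rw [hn, hf]

end RNA
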